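/- Let f, f' : X → X' be continuous maps and k : Z → X a continuous map admitting a continuous right homotopy inverse k' : X → Z (i.e. k ∘ k' ≃ 1_X). Then D(f ∘ k, f' ∘ k) = D(f, f'). -/

import Mathlib

/-- The (higher) homotopic distance of a family of continuous maps `f i : X → Y`:
the least `l` such that `X` admits an open cover by `l` open sets on each of which
all the maps restrict to pairwise homotopic maps (`∞` if no such cover exists). -/
noncomputable def homDist {X Y : Type*} [TopologicalSpace X] [TopologicalSpace Y]
    {k : ℕ} (f : Fin k → C(X, Y)) : ℕ∞ :=
  sInf ((fun n : ℕ => (n : ℕ∞)) '' {n : ℕ | ∃ U : Fin n → Set X,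
    (∀ j, IsOpen (U j)) ∧ (⋃ j, U j) = Set.univ ∧
    ∀ j i i', ((f i).restrict (U j)).Homotopic ((f i').restrict (U j))})

/-- Homotopic distance of two maps. -/
noncomputable def homDist2 {X Y : Type*} [TopologicalSpace X] [TopologicalSpace Y]
    (f g : C(X, Y)) : ℕ∞ :=
  homDist ![f, g]

lemma restrict_homotopic' {X Y : Type*} [TopologicalSpace X] [TopologicalSpace Y]
    {f g : C(X, Y)} (h : f.Homotopic g) (U : Set X) :
    (f.restrict U).Homotopic (g.restrict U) :=
  ContinuousMap.Homotopic.comp h (ContinuousMap.Homotopic.refl (⟨Subtype.val, continuous_subtype_val⟩ : C(U, X)))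

lemma homDist_comp_le' {X Y Z : Type*} [TopologicalSpace X] [TopologicalSpace Y]
    [TopologicalSpace Z] {n : ℕ} (f : Fin n → C(X, Y)) (k : C(Z, X)) :
    homDist (fun i => (f i).comp k) ≤ homDist f := by
  apply sInf_le_sInf
  rintro _ ⟨m, ⟨U, hU, hcov, hhom⟩, rfl⟩
  refine ⟨m, ⟨fun j => k ⁻¹' U j, fun j => (hU j).preimage k.continuous, ?_, ?_⟩, rfl⟩
  · rw [← Set.preimage_iUnion, hcov, Set.preimage_univ]
  · intro j i i'
    have key : ∀ g : C(X, Y), (g.comp k).restrict (k ⁻¹' U j) =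
        (g.restrict (U j)).comp ⟨fun z => ⟨k z.1, z.2⟩, by continuity⟩ := fun g => rfl
    rw [key, key]
    exact ContinuousMap.Homotopic.comp (hhom j i i') (ContinuousMap.Homotopic.refl _)

lemma homDist_le_of_homotopic' {X Y : Type*} [TopologicalSpace X] [TopologicalSpace Y]
    {n : ℕ} (f g : Fin n → C(X, Y)) (h : ∀ i, (f i).Homotopic (g i)) :
    homDist g ≤ homDist f := by
  apply sInf_le_sInf
  rintro _ ⟨m, ⟨U, hU, hcov, hhom⟩, rfl⟩
  refine ⟨m, ⟨U, hU, hcov, fun j i i' => ?_⟩, rfl⟩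
  exact ((restrict_homotopic' (h i) (U j)).symm.trans (hhom j i i')).trans
    (restrict_homotopic' (h i') (U j))

theorem homDist2_comp_right_of_right_homotopy_inverse {X X' Z : Type*} [TopologicalSpace X]
    [TopologicalSpace X'] [TopologicalSpace Z] (f f' : C(X, X')) (k : C(Z, X))
    (k' : C(X, Z)) (h : (k.comp k').Homotopic (ContinuousMap.id X)) :
    homDist2 (f.comp k) (f'.comp k) = homDist2 f f' := by
  unfold homDist2
  apply le_antisymm
  · have e : ![f.comp k, f'.comp k] = fun i => (![f, f'] i).comp k := by
      funext i; fin_cases i <;> rfl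
    rw [e]
    exact homDist_comp_le' ![f, f'] k
  · have e : (fun i => (![f.comp k, f'.comp k] i).comp k') =
        fun i => (![f, f'] i).comp (k.comp k') := by
      funext i; fin_cases i <;> rfl
    calc homDist ![f, f'] ≤ homDist (fun i => (![f, f'] i).comp (k.comp k')) := by
          apply homDist_le_of_homotopic'
          intro i
          have := ContinuousMap.Homotopic.comp (ContinuousMap.Homotopic.refl (![f, f'] i)) h
          simpa using this
      _ = homDist (fun i => (![f.comp k, f'.comp k] i).comp k') := by rw [e]
      _ ≤ homDist ![f.comp k, f'.comp k] := homDist_comp_le' _ k'
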